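/- Let v : [0,∞) → [0,∞) be a nonnegative increasing convex function with v(0) = 0 satisfying condition (V2). Then there exist constants a > 0 and b, c ∈ ℝ such that v(x) > a·x·ln x + b·x + c for all x ≥ 1. -/

import Mathlib

theorem stmt_11 (v : ℝ → ℝ)
    (hnonneg : ∀ x ∈ Set.Ici (0 : ℝ), 0 ≤ v x)
    (hmono : MonotoneOn v (Set.Ici 0))
    (hconv : ConvexOn ℝ (Set.Ici 0) v)
    (hv0 : v 0 = 0)
    (hV2 : ∀ s : ℝ, 1 < s → ∃ η : ℝ, 0 < η ∧ ∃ m : ℝ,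
      ∀ x : ℝ, 0 ≤ x → s * v x + η * x + m ≤ v (s * x)) :
    ∃ a : ℝ, 0 < a ∧ ∃ b c : ℝ, ∀ x : ℝ, 1 ≤ x →
      a * x * Real.log x + b * x + c < v x := by
  obtain ⟨η, hη, m, hsm⟩ := hV2 2 (by norm_num)
  have hlog2 : 0 < Real.log 2 := Real.log_pos (by norm_num)
  have key : ∀ n : ℕ, ∀ x : ℝ, 0 ≤ x →
      (2:ℝ)^n * v x + (η * n / 2) * ((2:ℝ)^n * x) + ((2:ℝ)^n - 1) * m
        ≤ v ((2:ℝ)^n * x) := by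
    intro n
    induction n with
    | zero => intro x hx; simp
    | succ n ih =>
      intro x hx
      have h1 := ih x hx
      have h2 := hsm ((2:ℝ)^n * x) (by positivity)
      have heq : (2:ℝ)^(n+1) * x = 2 * ((2:ℝ)^n * x) := by ring
      rw [heq]
      push_cast
      have hp : (2:ℝ)^(n+1) = 2 * 2^n := by ring
      rw [hp]
      nlinarith [h1, h2]
  refine ⟨η / (2 * Real.log 2), by positivity, -(η/2) - |m|, -1, ?_⟩
  intro y hy
  set n := ⌊Real.logb 2 y⌋₊ with hn
  have hy0 : (0:ℝ) < y := by linarith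
  have hlb : (0:ℝ) ≤ Real.logb 2 y := Real.logb_nonneg (by norm_num) hy
  have hn1 : (n:ℝ) ≤ Real.logb 2 y := Nat.floor_le hlb
  have hn2 : Real.logb 2 y < n + 1 := Nat.lt_floor_add_one _
  have hpow_le : (2:ℝ)^n ≤ y := by
    calc (2:ℝ)^n = (2:ℝ)^((n:ℝ)) := (Real.rpow_natCast 2 n).symm
    _ ≤ (2:ℝ)^(Real.logb 2 y) :=
        Real.rpow_le_rpow_of_exponent_le (by norm_num) hn1
    _ = y := Real.rpow_logb (by norm_num) (by norm_num) hy0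
  have hpow_pos : (0:ℝ) < (2:ℝ)^n := by positivity
  have hpow_one : (1:ℝ) ≤ (2:ℝ)^n := one_le_pow₀ (by norm_num)
  set x := y / 2^n with hx
  have hx0 : 0 ≤ x := by positivity
  have hxy : (2:ℝ)^n * x = y := by rw [hx]; field_simp
  have h1 := key n x hx0
  rw [hxy] at h1
  have hvx : 0 ≤ v x := hnonneg x hx0
  have hb1 : -(y * |m|) ≤ ((2:ℝ)^n - 1) * m := by
    nlinarith [neg_abs_le m, abs_nonneg m, hpow_le, hpow_one]
  have e1 : η / (2 * Real.log 2) * y * Real.log y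
      = (η/2) * (Real.logb 2 y) * y := by
    rw [Real.logb]; field_simp
  have e2 : (η/2) * (Real.logb 2 y) * y ≤ (η/2) * ((n:ℝ)+1) * y := by
    exact mul_le_mul_of_nonneg_right
      (mul_le_mul_of_nonneg_left hn2.le (by positivity : (0:ℝ) ≤ η/2)) hy0.le
  have hvxpow : 0 ≤ (2:ℝ)^n * v x := mul_nonneg hpow_pos.le hvx
  rw [e1]
  nlinarith [h1, hb1, e2, hvxpow]
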